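/- Let L > 0, γ > 0, c₁ ≥ 0, c₂ ≥ 0, and let X be uniformly distributed on [−L, L]. For a partition of [−L, L] into Borel sets T₀, T₁, T₂ with P(X ∈ T₀) > 0 and P(X ∈ T₁) > 0 and with ∫_{T₀} x·(1/(2L)) dx = 0, define the expected total cost J(T₀, T₁, T₂) = Var(X | X ∈ T₀)·P(X ∈ T₀) + c₁·P(X ∈ T₁) + (1/(γ+1))·Var(X | X ∈ T₁)·P(X ∈ T₁) + c₂·P(X ∈ T₂). Let 0 < β₁ < β₂ with 2β₂ − β₁ ≤ L. For the threshold-in-threshold policy f* take T₀* = [−β₁, β₁], T₁* = [−β₂, −β₁) ∪ (β₁, β₂], T₂* = [−L, −β₂) ∪ (β₂, L], and for the modified policy f′ take T₀′ = [−β₁, β₁], T₁′ = (β₁, 2β₂ − β₁], T₂′ = [−L, −β₁) ∪ (2β₂ − β₁, L]. Then J(T₀′, T₁′, T₂′) < J(T₀*, T₁*, T₂*). -/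

import Mathlib

open MeasureTheory ProbabilityTheory

/-- Expected total cost of a scheduling policy with no-transmission region `T₀`,
noisy-transmission region `T₁` and perfect-transmission region `T₂`, for a source with
distribution `μ`, signal-to-noise ratio `γ` and communication costs `c₁`, `c₂`. -/
noncomputable def schedCost (μ : Measure ℝ) (γ c₁ c₂ : ℝ) (T₀ T₁ T₂ : Set ℝ) : ℝ :=
  variance id (μ[|T₀]) * (μ T₀).toReal
  + c₁ * (μ T₁).toReal
  + (1/(γ+1)) * variance id (μ[|T₁]) * (μ T₁).toReal
  + c₂ * (μ T₂).toReal

lemma meas_apply (L : ℝ) {T : Set ℝ} (hm : MeasurableSet T) (hsub : T ⊆ Set.Icc (-L) L) :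
    ((ENNReal.ofReal (2*L))⁻¹ • volume.restrict (Set.Icc (-L) L)) T
      = (ENNReal.ofReal (2*L))⁻¹ * volume T := by
  rw [Measure.smul_apply, Measure.restrict_apply hm, Set.inter_eq_self_of_subset_left hsub,
    smul_eq_mul]

lemma cond_eq (L : ℝ) (hL : 0 < L) {T : Set ℝ} (hm : MeasurableSet T)
    (hsub : T ⊆ Set.Icc (-L) L) :
    ((ENNReal.ofReal (2*L))⁻¹ • volume.restrict (Set.Icc (-L) L))[|T]
      = (volume T)⁻¹ • volume.restrict T := by
  have hc0 : (ENNReal.ofReal (2*L)) ≠ 0 := by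
    simp only [ne_eq, ENNReal.ofReal_eq_zero, not_le]; linarith
  have hctop : (ENNReal.ofReal (2*L)) ≠ ⊤ := ENNReal.ofReal_ne_top
  unfold ProbabilityTheory.cond
  rw [meas_apply L hm hsub, Measure.restrict_smul, Measure.restrict_restrict hm,
    Set.inter_eq_self_of_subset_left hsub, smul_smul]
  congr 1
  rw [ENNReal.mul_inv (Or.inl (ENNReal.inv_ne_zero.mpr hctop)) (Or.inl (ENNReal.inv_ne_top.mpr hc0)),
    inv_inv, mul_right_comm, ENNReal.mul_inv_cancel hc0 hctop, one_mul]

lemma variance_uniform {a b : ℝ} {T : Set ℝ} (hm : MeasurableSet T) (hsub : T ⊆ Set.Icc a b)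
    (h0 : volume T ≠ 0) :
    variance id ((volume T)⁻¹ • volume.restrict T)
      = (volume T).toReal⁻¹ * (∫ x in T, x^2) - ((volume T).toReal⁻¹ * ∫ x in T, x)^2 := by
  have htop : volume T ≠ ⊤ :=
    ((measure_mono hsub).trans_lt (by rw [Real.volume_Icc]; exact ENNReal.ofReal_lt_top)).ne
  set ν := (volume T)⁻¹ • volume.restrict T with hν
  have hprob : IsProbabilityMeasure ν := by
    constructor
    rw [hν, Measure.smul_apply, Measure.restrict_apply_univ, smul_eq_mul,
      ENNReal.inv_mul_cancel h0 htop]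
  have hbd : ∀ᵐ x ∂ν, id x ∈ Set.Icc a b := by
    rw [hν]
    exact Measure.ae_smul_measure ((ae_restrict_mem hm).mono fun x hx => hsub hx) _
  have hX : MemLp (id : ℝ → ℝ) 2 ν := memLp_of_bounded hbd measurable_id.aestronglyMeasurable 2
  rw [variance_eq_sub hX]
  simp only [hν, Pi.pow_apply, id_eq, integral_smul_measure, smul_eq_mul, ENNReal.toReal_inv]

lemma int_Ioc_x {a b : ℝ} (h : a ≤ b) : ∫ x in Set.Ioc a b, x = (b^2 - a^2)/2 := by
  rw [← intervalIntegral.integral_of_le h, integral_id]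

lemma int_Ioc_sq {a b : ℝ} (h : a ≤ b) : ∫ x in Set.Ioc a b, x^2 = (b^3 - a^3)/3 := by
  rw [← intervalIntegral.integral_of_le h, integral_pow]
  norm_num

lemma int_Ico_x {a b : ℝ} (h : a ≤ b) : ∫ x in Set.Ico a b, x = (b^2 - a^2)/2 := by
  rw [restrict_Ico_eq_restrict_Ioc]; exact int_Ioc_x h

lemma int_Ico_sq {a b : ℝ} (h : a ≤ b) : ∫ x in Set.Ico a b, x^2 = (b^3 - a^3)/3 := by
  rw [restrict_Ico_eq_restrict_Ioc]; exact int_Ioc_sq h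

lemma intOn_x {a b : ℝ} : IntegrableOn (fun x : ℝ => x) (Set.Ico a b) volume :=
  (continuous_id.integrableOn_Icc).mono_set Set.Ico_subset_Icc_self

lemma intOn_sq {a b : ℝ} : IntegrableOn (fun x : ℝ => x^2) (Set.Ico a b) volume :=
  ((continuous_pow 2).integrableOn_Icc).mono_set Set.Ico_subset_Icc_self

lemma var_Ioc {a m : ℝ} (h : a < m) :
    variance id ((volume (Set.Ioc a m))⁻¹ • volume.restrict (Set.Ioc a m)) = (m-a)^2/12 := by
  rw [variance_uniform measurableSet_Ioc Set.Ioc_subset_Icc_self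
      (by rw [Real.volume_Ioc]; simp only [ne_eq, ENNReal.ofReal_eq_zero, not_le]; linarith),
    Real.volume_Ioc, ENNReal.toReal_ofReal (by linarith), int_Ioc_x h.le, int_Ioc_sq h.le]
  have hne : m - a ≠ 0 := by linarith
  field_simp
  ring

lemma var_sym {a b : ℝ} (h0 : 0 < a) (h : a < b) :
    variance id ((volume (Set.Ico (-b) (-a) ∪ Set.Ioc a b))⁻¹ •
        volume.restrict (Set.Ico (-b) (-a) ∪ Set.Ioc a b))
      = (b^3 - a^3)/(3*(b-a)) := by
  have hd : Disjoint (Set.Ico (-b) (-a)) (Set.Ioc a b) := by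
    rw [Set.disjoint_left]
    rintro x ⟨_, hx2⟩ ⟨hx3, _⟩
    linarith
  have hsub : Set.Ico (-b) (-a) ∪ Set.Ioc a b ⊆ Set.Icc (-b) b := by
    rintro x (⟨h1, h2⟩ | ⟨h1, h2⟩) <;> constructor <;> linarith
  have hvol : volume (Set.Ico (-b) (-a) ∪ Set.Ioc a b) = ENNReal.ofReal (2*(b-a)) := by
    rw [measure_union hd measurableSet_Ioc, Real.volume_Ico, Real.volume_Ioc,
      ← ENNReal.ofReal_add (by linarith) (by linarith)]
    ring_nf
  rw [variance_uniform (measurableSet_Ico.union measurableSet_Ioc) hsub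
      (by rw [hvol]; simp only [ne_eq, ENNReal.ofReal_eq_zero, not_le]; linarith), hvol,
    ENNReal.toReal_ofReal (by linarith),
    setIntegral_union hd measurableSet_Ioc intOn_x (continuous_id.integrableOn_Ioc),
    setIntegral_union hd measurableSet_Ioc intOn_sq ((continuous_pow 2).integrableOn_Ioc),
    int_Ico_x (by linarith), int_Ioc_x h.le, int_Ico_sq (by linarith), int_Ioc_sq h.le]
  have hne : b - a ≠ 0 := by linarith
  field_simp
  ring

lemma meas_toReal (L : ℝ) (hL : 0 < L) {T : Set ℝ} (hm : MeasurableSet T)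
    (hsub : T ⊆ Set.Icc (-L) L) :
    (((ENNReal.ofReal (2*L))⁻¹ • volume.restrict (Set.Icc (-L) L)) T).toReal
      = (volume T).toReal / (2*L) := by
  have htop : volume T ≠ ⊤ :=
    ((measure_mono hsub).trans_lt (by rw [Real.volume_Icc]; exact ENNReal.ofReal_lt_top)).ne
  rw [meas_apply L hm hsub, ENNReal.toReal_mul, ENNReal.toReal_inv,
    ENNReal.toReal_ofReal (by linarith)]
  rw [inv_mul_eq_div]

theorem stmt_13 (L γ c₁ c₂ β₁ β₂ : ℝ) (hL : 0 < L) (hγ : 0 < γ)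
    (hc₁ : 0 ≤ c₁) (hc₂ : 0 ≤ c₂)
    (h1 : 0 < β₁) (h2 : β₁ < β₂) (h3 : 2*β₂ - β₁ ≤ L) :
    schedCost ((ENNReal.ofReal (2*L))⁻¹ • volume.restrict (Set.Icc (-L) L)) γ c₁ c₂
        (Set.Icc (-β₁) β₁)
        (Set.Ioc β₁ (2*β₂ - β₁))
        (Set.Ico (-L) (-β₁) ∪ Set.Ioc (2*β₂ - β₁) L)
      <
    schedCost ((ENNReal.ofReal (2*L))⁻¹ • volume.restrict (Set.Icc (-L) L)) γ c₁ c₂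
        (Set.Icc (-β₁) β₁)
        (Set.Ico (-β₂) (-β₁) ∪ Set.Ioc β₁ β₂)
        (Set.Ico (-L) (-β₂) ∪ Set.Ioc β₂ L) := by
  have hbL : β₂ ≤ L := by linarith
  have hmL : 2*β₂ - β₁ ≤ L := h3
  have ham : β₁ < 2*β₂ - β₁ := by linarith
  -- subset facts
  have hsub1' : Set.Ioc β₁ (2*β₂ - β₁) ⊆ Set.Icc (-L) L := by
    rintro x ⟨hx1, hx2⟩; constructor <;> linarith
  have hsub1s : Set.Ico (-β₂) (-β₁) ∪ Set.Ioc β₁ β₂ ⊆ Set.Icc (-L) L := by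
    rintro x (⟨hx1, hx2⟩ | ⟨hx1, hx2⟩) <;> constructor <;> linarith
  have hsub2' : Set.Ico (-L) (-β₁) ∪ Set.Ioc (2*β₂ - β₁) L ⊆ Set.Icc (-L) L := by
    rintro x (⟨hx1, hx2⟩ | ⟨hx1, hx2⟩) <;> constructor <;> linarith
  have hsub2s : Set.Ico (-L) (-β₂) ∪ Set.Ioc β₂ L ⊆ Set.Icc (-L) L := by
    rintro x (⟨hx1, hx2⟩ | ⟨hx1, hx2⟩) <;> constructor <;> linarith
  -- measurability
  have hm1' : MeasurableSet (Set.Ioc β₁ (2*β₂ - β₁)) := measurableSet_Ioc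
  have hm1s : MeasurableSet (Set.Ico (-β₂) (-β₁) ∪ Set.Ioc β₁ β₂) :=
    measurableSet_Ico.union measurableSet_Ioc
  have hm2' : MeasurableSet (Set.Ico (-L) (-β₁) ∪ Set.Ioc (2*β₂ - β₁) L) :=
    measurableSet_Ico.union measurableSet_Ioc
  have hm2s : MeasurableSet (Set.Ico (-L) (-β₂) ∪ Set.Ioc β₂ L) :=
    measurableSet_Ico.union measurableSet_Ioc
  -- volumes
  have hv1' : (volume (Set.Ioc β₁ (2*β₂ - β₁))).toReal = 2*(β₂-β₁) := by
    rw [Real.volume_Ioc, ENNReal.toReal_ofReal (by linarith)]; ring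
  have hv1s : (volume (Set.Ico (-β₂) (-β₁) ∪ Set.Ioc β₁ β₂)).toReal = 2*(β₂-β₁) := by
    have hd : Disjoint (Set.Ico (-β₂) (-β₁)) (Set.Ioc β₁ β₂) := by
      rw [Set.disjoint_left]; rintro x ⟨_, hx2⟩ ⟨hx3, _⟩; linarith
    rw [measure_union hd measurableSet_Ioc, Real.volume_Ico, Real.volume_Ioc,
      ← ENNReal.ofReal_add (by linarith) (by linarith),
      ENNReal.toReal_ofReal (by linarith)]
    ring
  have hv2' : (volume (Set.Ico (-L) (-β₁) ∪ Set.Ioc (2*β₂ - β₁) L)).toReal = 2*L - 2*β₂ := by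
    have hd : Disjoint (Set.Ico (-L) (-β₁)) (Set.Ioc (2*β₂ - β₁) L) := by
      rw [Set.disjoint_left]; rintro x ⟨_, hx2⟩ ⟨hx3, _⟩; linarith
    rw [measure_union hd measurableSet_Ioc, Real.volume_Ico, Real.volume_Ioc,
      ← ENNReal.ofReal_add (by linarith) (by linarith),
      ENNReal.toReal_ofReal (by linarith)]
    ring
  have hv2s : (volume (Set.Ico (-L) (-β₂) ∪ Set.Ioc β₂ L)).toReal = 2*L - 2*β₂ := by
    have hd : Disjoint (Set.Ico (-L) (-β₂)) (Set.Ioc β₂ L) := by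
      rw [Set.disjoint_left]; rintro x ⟨_, hx2⟩ ⟨hx3, _⟩; linarith
    rw [measure_union hd measurableSet_Ioc, Real.volume_Ico, Real.volume_Ioc,
      ← ENNReal.ofReal_add (by linarith) (by linarith),
      ENNReal.toReal_ofReal (by linarith)]
    ring
  unfold schedCost
  rw [cond_eq L hL hm1' hsub1', cond_eq L hL hm1s hsub1s, var_Ioc ham, var_sym h1 h2,
    meas_toReal L hL hm1' hsub1', meas_toReal L hL hm1s hsub1s,
    meas_toReal L hL hm2' hsub2', meas_toReal L hL hm2s hsub2s,
    hv1', hv1s, hv2', hv2s]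
  have hkey : (2*β₂ - β₁ - β₁)^2/12 < (β₂^3 - β₁^3)/(3*(β₂-β₁)) := by
    rw [div_lt_div_iff₀ (by norm_num) (by nlinarith)]
    nlinarith [mul_pos h1 (sub_pos.mpr h2), sq_nonneg (β₂ - β₁)]
  have hp : 0 < 2*(β₂-β₁)/(2*L) := div_pos (by linarith) (by linarith)
  have hg : 0 < 1/(γ+1) := by positivity
  have hmain : 1/(γ+1) * ((2*β₂ - β₁ - β₁)^2/12) * (2*(β₂-β₁)/(2*L))
      < 1/(γ+1) * ((β₂^3 - β₁^3)/(3*(β₂-β₁))) * (2*(β₂-β₁)/(2*L)) :=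
    mul_lt_mul_of_pos_right (mul_lt_mul_of_pos_left hkey hg) hp
  linarith
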